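/- arXiv:2512.13414 — 6 statements merged into one kernel-verified Lean document; each statement's English description precedes it below -/
import Mathlib

section
/- Let x > 0 and y be real numbers, let n2 be a positive integer, and let r ≥ 1 be a real number such that x + y > 0 and x - r*y > 0. Then x^((r+1)*n2) ≥ (x+y)^(r*n2) * (x-r*y)^(n2). -/
open Real

theorem stmt0 (x y r : ℝ) (n2 : ℕ) (hx : 0 < x) (hn2 : 0 < n2) (hr : 1 ≤ r)
    (hxy : 0 < x + y) (hxr : 0 < x - r * y) :
    (x + y) ^ (r * n2) * (x - r * y) ^ (n2 : ℝ) ≤ x ^ ((r + 1) * n2) := by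
  have hr1 : (0:ℝ) < r + 1 := by linarith
  have hw : r/(r+1) + 1/(r+1) = 1 := by field_simp
  have key := Real.geom_mean_le_arith_mean2_weighted (by positivity) (by positivity)
    hxy.le hxr.le hw
  have harith : r/(r+1)*(x+y) + 1/(r+1)*(x-r*y) = x := by field_simp; ring
  rw [harith] at key
  have h2 := Real.rpow_le_rpow (by positivity) key (by positivity : (0:ℝ) ≤ (r+1)*n2)
  rw [Real.mul_rpow (by positivity) (by positivity), ← Real.rpow_mul hxy.le,
    ← Real.rpow_mul hxr.le] at h2
  have e1 : r/(r+1)*((r+1)*n2) = r*n2 := by field_simp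
  have e2 : 1/(r+1)*((r+1)*n2) = (n2:ℝ) := by field_simp
  rwa [e1, e2] at h2
end

section
/- Let θ1, θ2 ∈ [0,1] and let d1, d2, n1, n2 be positive reals with n1/d1 = n2/d2 (proportional allocation). Let θ = (d1*θ1 + d2*θ2)/(d1 + d2) and n = n1 + n2. Then (1 - θ1)^(n1) * (1 - θ2)^(n2) ≤ (1 - θ)^n, equivalently 1 - (1-θ1)^(n1)*(1-θ2)^(n2) ≥ 1 - (1-θ)^n. -/
open Real

theorem stmt2 (θ1 θ2 d1 d2 n1 n2 : ℝ)
    (hθ1 : 0 ≤ θ1) (hθ1' : θ1 ≤ 1) (hθ2 : 0 ≤ θ2) (hθ2' : θ2 ≤ 1)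
    (hd1 : 0 < d1) (hd2 : 0 < d2) (hn1 : 0 < n1) (hn2 : 0 < n2)
    (hprop : n1 / d1 = n2 / d2) :
    (1 - θ1) ^ n1 * (1 - θ2) ^ n2
      ≤ (1 - (d1 * θ1 + d2 * θ2) / (d1 + d2)) ^ (n1 + n2) := by
  have ha : (0:ℝ) ≤ 1 - θ1 := by linarith
  have hb : (0:ℝ) ≤ 1 - θ2 := by linarith
  have hn : 0 < n1 + n2 := by linarith
  have hw : n1/(n1+n2) + n2/(n1+n2) = 1 := by field_simp
  have key := Real.geom_mean_le_arith_mean2_weighted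
    (by positivity) (by positivity) ha hb hw
  have h2 := Real.rpow_le_rpow (by positivity) key hn.le
  have hL : ((1-θ1)^(n1/(n1+n2)) * (1-θ2)^(n2/(n1+n2)))^(n1+n2)
      = (1 - θ1) ^ n1 * (1 - θ2) ^ n2 := by
    rw [Real.mul_rpow (by positivity) (by positivity),
      ← Real.rpow_mul ha, ← Real.rpow_mul hb,
      div_mul_cancel₀ _ hn.ne', div_mul_cancel₀ _ hn.ne']
  have hprop' : n1 * d2 = n2 * d1 := by
    field_simp at hprop; linarith
  have hR : n1/(n1+n2) * (1-θ1) + n2/(n1+n2) * (1-θ2)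
      = 1 - (d1 * θ1 + d2 * θ2) / (d1 + d2) := by
    field_simp
    linear_combination (θ2 - θ1) * hprop'
  rw [hL, hR] at h2
  exact h2
end

section
/- Let k ≥ 1 and for i = 1,...,k let θ_i ∈ [0,1], d_i > 0, and n_i > 0 be reals with n_i/d_i = c for a common constant c > 0. Let d = Σ_i d_i, n = Σ_i n_i, and θ = (Σ_i d_i*θ_i)/d. Then ∏_{i=1}^k (1 - θ_i)^(n_i) ≤ (1 - θ)^n. -/
open Real

theorem stmt3 (k : ℕ) (hk : 1 ≤ k) (θ d n : Fin k → ℝ) (c : ℝ) (hc : 0 < c)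
    (hθ : ∀ i, 0 ≤ θ i ∧ θ i ≤ 1) (hd : ∀ i, 0 < d i) (hn : ∀ i, 0 < n i)
    (hprop : ∀ i, n i / d i = c) :
    ∏ i, (1 - θ i) ^ (n i)
      ≤ (1 - (∑ i, d i * θ i) / (∑ i, d i)) ^ (∑ i, n i) := by
  have hne : (Finset.univ : Finset (Fin k)).Nonempty := by
    have : 0 < k := hk
    exact ⟨⟨0, this⟩, Finset.mem_univ _⟩
  set D := ∑ i, d i with hD
  have hDpos : 0 < D := Finset.sum_pos (fun i _ => hd i) hne
  have hni : ∀ i, n i = c * d i := fun i => by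
    have h := hprop i
    rw [div_eq_iff (hd i).ne'] at h
    linarith
  have hsumn : ∑ i, n i = c * D := by
    rw [hD, Finset.mul_sum]
    exact Finset.sum_congr rfl fun i _ => hni i
  have hz : ∀ i, 0 ≤ 1 - θ i := fun i => by linarith [(hθ i).2]
  have hw : ∀ i, 0 ≤ d i / D := fun i => div_nonneg (hd i).le hDpos.le
  have hwsum : ∑ i, d i / D = 1 := by
    rw [← Finset.sum_div, ← hD, div_self hDpos.ne']
  have amgm := Real.geom_mean_le_arith_mean_weighted Finset.univ
    (fun i => d i / D) (fun i => 1 - θ i) (fun i _ => hw i) hwsum (fun i _ => hz i)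
  have hrhs : ∑ i, (d i / D) * (1 - θ i) = 1 - (∑ i, d i * θ i) / D := by
    have h1 : ∑ i, (d i / D) * (1 - θ i) = (∑ i, (d i - d i * θ i)) / D := by
      rw [Finset.sum_div]
      exact Finset.sum_congr rfl fun i _ => by field_simp
    rw [h1, Finset.sum_sub_distrib, ← hD, sub_div, div_self hDpos.ne']
  rw [hrhs] at amgm
  have hprodnn : 0 ≤ ∏ i, (1 - θ i) ^ (d i / D) :=
    Finset.prod_nonneg fun i _ => Real.rpow_nonneg (hz i) _
  have key := Real.rpow_le_rpow hprodnn amgm (by positivity : (0:ℝ) ≤ c * D)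
  rw [← Real.finset_prod_rpow _ _ (fun i _ => Real.rpow_nonneg (hz i) _)] at key
  calc ∏ i, (1 - θ i) ^ (n i)
      = ∏ i, ((1 - θ i) ^ (d i / D)) ^ (c * D) := by
        refine Finset.prod_congr rfl fun i _ => ?_
        rw [← Real.rpow_mul (hz i)]
        congr 1
        rw [hni i]
        field_simp
    _ ≤ (1 - (∑ i, d i * θ i) / D) ^ (c * D) := key
    _ = (1 - (∑ i, d i * θ i) / D) ^ (∑ i, n i) := by rw [hsumn]
end

section
/- Let k ≥ 1 and for i = 1,...,k let m_i be a nonnegative real, d_i a positive real with m_i ≤ d_i, and n_i a positive real with n_i/d_i = c for a common constant c > 0. Let m = Σ_i m_i, d = Σ_i d_i, and n = Σ_i n_i. Then 1 - ∏_{i=1}^k (1 - m_i/d_i)^(n_i) ≥ 1 - (1 - m/d)^n. -/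
open Real

theorem stmt4 (k : ℕ) (hk : 1 ≤ k) (m d n : Fin k → ℝ) (c : ℝ) (hc : 0 < c)
    (hm : ∀ i, 0 ≤ m i) (hd : ∀ i, 0 < d i) (hmd : ∀ i, m i ≤ d i)
    (hn : ∀ i, 0 < n i) (hprop : ∀ i, n i / d i = c) :
    1 - (1 - (∑ i, m i) / (∑ i, d i)) ^ (∑ i, n i)
      ≤ 1 - ∏ i, (1 - m i / d i) ^ (n i) := by
  have hne : (Finset.univ : Finset (Fin k)).Nonempty := by
    have : NeZero k := ⟨by omega⟩
    exact Finset.univ_nonempty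
  have hD : (0:ℝ) < ∑ i, d i := Finset.sum_pos (fun i _ => hd i) hne
  set D := ∑ i, d i with hDdef
  set x : Fin k → ℝ := fun i => 1 - m i / d i with hx
  set w : Fin k → ℝ := fun i => d i / D with hw
  have hxnn : ∀ i, 0 ≤ x i := fun i => by
    have := (div_le_one (hd i)).2 (hmd i); simp [hx]; linarith
  have hwnn : ∀ i, 0 ≤ w i := fun i => div_nonneg (hd i).le hD.le
  have hwsum : ∑ i, w i = 1 := by
    rw [← Finset.sum_div]; exact div_self hD.ne'
  have hni : ∀ i, n i = c * d i := fun i => by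
    have := hprop i
    rw [div_eq_iff (hd i).ne'] at this; linarith
  -- AM-GM
  have hAMGM : ∏ i, x i ^ w i ≤ ∑ i, w i * x i :=
    Real.geom_mean_le_arith_mean_weighted _ w x (fun i _ => hwnn i) hwsum
      (fun i _ => hxnn i)
  have hAM : ∑ i, w i * x i = 1 - (∑ i, m i) / D := by
    have : ∀ i, w i * x i = (d i - m i) / D := fun i => by
      simp only [hw, hx]
      rw [div_mul_eq_mul_div]
      congr 1
      rw [mul_sub, mul_one, mul_div_cancel₀ _ (hd i).ne']
    rw [Finset.sum_congr rfl (fun i _ => this i), ← Finset.sum_div,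
      Finset.sum_sub_distrib, sub_div, div_self hD.ne']
  have hnsum : ∑ i, n i = c * D := by
    rw [Finset.mul_sum]; exact Finset.sum_congr rfl fun i _ => hni i
  have hprodnn : 0 ≤ ∏ i, x i ^ w i :=
    Finset.prod_nonneg fun i _ => Real.rpow_nonneg (hxnn i) _
  have key : ∏ i, x i ^ n i ≤ (1 - (∑ i, m i) / D) ^ (c * D) := by
    have h1 : ∏ i, x i ^ n i = (∏ i, x i ^ w i) ^ (c * D) := by
      rw [← Real.finset_prod_rpow _ _ (fun i _ => Real.rpow_nonneg (hxnn i) _)]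
      refine Finset.prod_congr rfl fun i _ => ?_
      rw [← Real.rpow_mul (hxnn i)]
      congr 1
      simp only [hw]
      field_simp [hni i]
      rw [hni i]; ring
    rw [h1]
    exact Real.rpow_le_rpow hprodnn (hAM ▸ hAMGM)
      (by positivity)
  rw [hnsum]
  linarith
end

section
/- Let k ≥ 2, and suppose that for all partitions into at most k subdomains with proportional allocation the inequality ∏_{i=1}^k (1-θ_i)^(n_i) ≤ (1-θ)^n holds (with θ the size-weighted average and n = Σ n_i). Then the same inequality holds for k+1 subdomains: given θ_i ∈ [0,1], d_i > 0, n_i > 0 with n_i/d_i constant for i = 1,...,k+1, merging the first k subdomains into one subdomain with size d' = Σ_{i=1}^k d_i, allocation n' = Σ_{i=1}^k n_i, and rate θ' = (Σ_{i=1}^k d_i θ_i)/d' satisfies ∏_{i=1}^{k+1} (1-θ_i)^(n_i) ≤ (1-θ')^(n') * (1-θ_{k+1})^(n_{k+1}) ≤ (1-θ)^n. -/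
open Real

theorem stmt11 (k : ℕ) (hk : 2 ≤ k)
    (IH : ∀ j : ℕ, 1 ≤ j → j ≤ k → ∀ (θ d n : Fin j → ℝ) (c : ℝ), 0 < c →
      (∀ i, 0 ≤ θ i ∧ θ i ≤ 1) → (∀ i, 0 < d i) → (∀ i, 0 < n i) →
      (∀ i, n i / d i = c) →
      ∏ i, (1 - θ i) ^ (n i)
        ≤ (1 - (∑ i, d i * θ i) / (∑ i, d i)) ^ (∑ i, n i))
    (θ d n : Fin (k + 1) → ℝ) (c : ℝ) (hc : 0 < c)
    (hθ : ∀ i, 0 ≤ θ i ∧ θ i ≤ 1) (hd : ∀ i, 0 < d i) (hn : ∀ i, 0 < n i)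
    (hprop : ∀ i, n i / d i = c) :
    ∏ i, (1 - θ i) ^ (n i)
      ≤ (1 - (∑ i : Fin k, d i.castSucc * θ i.castSucc) / (∑ i : Fin k, d i.castSucc))
            ^ (∑ i : Fin k, n i.castSucc)
          * (1 - θ (Fin.last k)) ^ (n (Fin.last k)) ∧
    (1 - (∑ i : Fin k, d i.castSucc * θ i.castSucc) / (∑ i : Fin k, d i.castSucc))
          ^ (∑ i : Fin k, n i.castSucc)
        * (1 - θ (Fin.last k)) ^ (n (Fin.last k))
      ≤ (1 - (∑ i, d i * θ i) / (∑ i, d i)) ^ (∑ i, n i) := by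
  have hk1 : 1 ≤ k := le_trans (by norm_num) hk
  set D : ℝ := ∑ i : Fin k, d i.castSucc with hD
  set N : ℝ := ∑ i : Fin k, n i.castSucc with hN
  set S : ℝ := ∑ i : Fin k, d i.castSucc * θ i.castSucc with hS
  have hne : (Finset.univ : Finset (Fin k)).Nonempty :=
    ⟨⟨0, by omega⟩, Finset.mem_univ _⟩
  have hDpos : 0 < D := Finset.sum_pos (fun i _ => hd _) hne
  have hNpos : 0 < N := Finset.sum_pos (fun i _ => hn _) hne
  have hSnonneg : 0 ≤ S := Finset.sum_nonneg fun i _ =>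
    mul_nonneg (hd _).le (hθ _).1
  have hSle : S ≤ D := Finset.sum_le_sum fun i _ => by
    nlinarith [(hθ i.castSucc).1, (hθ i.castSucc).2, hd i.castSucc]
  have hθ'1 : 0 ≤ S / D := div_nonneg hSnonneg hDpos.le
  have hθ'2 : S / D ≤ 1 := (div_le_one hDpos).2 hSle
  have hnd : ∀ i, n i = c * d i := fun i => by
    have := hprop i
    rw [div_eq_iff (hd i).ne'] at this
    linarith
  have hND : N / D = c := by
    rw [div_eq_iff hDpos.ne']
    simp only [hN, hD, Finset.mul_sum]
    exact Finset.sum_congr rfl fun i _ => hnd _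
  constructor
  · -- first inequality
    rw [Fin.prod_univ_castSucc]
    refine mul_le_mul_of_nonneg_right ?_ (rpow_nonneg ?_ _)
    · have := IH k hk1 le_rfl (fun i => θ i.castSucc) (fun i => d i.castSucc)
        (fun i => n i.castSucc) c hc (fun i => hθ _) (fun i => hd _)
        (fun i => hn _) (fun i => hprop _)
      simpa using this
    · linarith [(hθ (Fin.last k)).2]
  · -- second inequality: two-subdomain case
    have h2 := IH 2 (by norm_num) hk
      ![S / D, θ (Fin.last k)] ![D, d (Fin.last k)] ![N, n (Fin.last k)] c hc
      (by
        intro i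
        fin_cases i
        · exact ⟨hθ'1, hθ'2⟩
        · exact hθ _)
      (by intro i; fin_cases i <;> simp [hDpos, hd])
      (by intro i; fin_cases i <;> simp [hNpos, hn])
      (by intro i; fin_cases i <;> simp [hND, hprop])
    simp only [Fin.prod_univ_two, Fin.sum_univ_two, Matrix.cons_val_zero,
      Matrix.cons_val_one, Matrix.head_cons] at h2
    have e1 : D * (S / D) + d (Fin.last k) * θ (Fin.last k)
        = ∑ i : Fin (k+1), d i * θ i := by
      rw [mul_div_cancel₀ _ hDpos.ne', Fin.sum_univ_castSucc]
    have e2 : D + d (Fin.last k) = ∑ i : Fin (k+1), d i := by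
      rw [Fin.sum_univ_castSucc]
    have e3 : N + n (Fin.last k) = ∑ i : Fin (k+1), n i := by
      rw [Fin.sum_univ_castSucc]
    rw [e1, e2, e3] at h2
    exact h2
end

section
/- Suppose the MG domain is partitioned into k subdomains of equal size d/k with m_i failure-causing MGs in subdomain i, and n selected MGs are allocated equally (n/k per subdomain). Then P_p^{MG} = 1 - ∏_{i=1}^k (1 - k*m_i/d)^(n/k) ≥ 1 - (1 - (Σ_i m_i)/d)^n = P_r^{MG}, with equality if and only if all the ratios m_i are equal. -/
open Real

theorem stmt13 (k : ℕ) (hk : 1 ≤ k) (d n : ℝ) (hd : 0 < d) (hn : 0 < n)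
    (m : Fin k → ℝ) (hm : ∀ i, 0 ≤ m i) (hm' : ∀ i, m i < d / k) :
    (1 - (1 - (∑ i, m i) / d) ^ n
        ≤ 1 - ∏ i, (1 - (k : ℝ) * m i / d) ^ (n / k)) ∧
    (1 - ∏ i, (1 - (k : ℝ) * m i / d) ^ (n / k)
        = 1 - (1 - (∑ i, m i) / d) ^ n ↔ ∀ i j, m i = m j) := by
  have hk0 : (0:ℝ) < k := by exact_mod_cast hk
  set x : Fin k → ℝ := fun i => 1 - (k : ℝ) * m i / d with hxdef
  have hxpos : ∀ i, 0 < x i := by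
    intro i
    have : (k : ℝ) * m i < d := by
      have := (hm' i)
      calc (k : ℝ) * m i < (k : ℝ) * (d / k) := by
            exact mul_lt_mul_of_pos_left this hk0
        _ = d := by field_simp
    have : (k : ℝ) * m i / d < 1 := (div_lt_one hd).mpr this
    simpa [hxdef] using sub_pos.mpr this
  set A : ℝ := 1 - (∑ i, m i) / d with hAdef
  have hsum : ∑ i, (1 / (k:ℝ)) * x i = A := by
    rw [← Finset.mul_sum]
    simp only [hxdef, hAdef]
    rw [Finset.sum_sub_distrib]
    simp only [Finset.sum_const, Finset.card_univ, Fintype.card_fin, nsmul_eq_mul, mul_one]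
    rw [← Finset.sum_div, ← Finset.mul_sum]
    field_simp
  set G : ℝ := ∏ i, x i ^ (1 / (k:ℝ)) with hGdef
  have hG0 : 0 < G :=
    Finset.prod_pos fun i _ => Real.rpow_pos_of_pos (hxpos i) _
  have hwsum : ∑ _i : Fin k, (1 / (k:ℝ)) = 1 := by
    simp [Finset.card_univ]
    field_simp
  have hGA : G ≤ A := by
    calc G ≤ ∑ i, (1 / (k:ℝ)) * x i :=
          Real.geom_mean_le_arith_mean_weighted Finset.univ _ x
            (fun i _ => by positivity) hwsum (fun i _ => (hxpos i).le)
      _ = A := hsum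
  have hA0 : 0 < A := lt_of_lt_of_le hG0 hGA
  have hprodeq : ∏ i, x i ^ (n / (k:ℝ)) = G ^ n := by
    rw [hGdef, ← Real.finset_prod_rpow _ _ (fun i _ => (Real.rpow_pos_of_pos (hxpos i) _).le) n]
    refine Finset.prod_congr rfl fun i _ => ?_
    rw [← Real.rpow_mul (hxpos i).le]
    ring_nf
  have hGlt : (∃ i j : Fin k, m i ≠ m j) → G < A := by
    rintro ⟨i, j, hij⟩
    have hxij : x i ≠ x j := by
      simp only [hxdef]
      intro h
      apply hij
      have : (k : ℝ) * m i / d = (k : ℝ) * m j / d := by linarith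
      field_simp at this
      linarith
    have hjen := strictConcaveOn_log_Ioi.lt_map_sum
      (t := Finset.univ) (w := fun _ : Fin k => 1 / (k:ℝ)) (p := x)
      (fun i _ => by positivity) hwsum (fun i _ => hxpos i)
      ⟨i, Finset.mem_univ i, j, Finset.mem_univ j, hxij⟩
    simp only [smul_eq_mul] at hjen
    have hlogG : Real.log G = ∑ i, (1 / (k:ℝ)) * Real.log (x i) := by
      rw [hGdef, Real.log_prod (fun i _ => (Real.rpow_pos_of_pos (hxpos i) _).ne')]
      exact Finset.sum_congr rfl (fun i _ => Real.log_rpow (hxpos i) _)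
    rw [← hlogG, hsum] at hjen
    exact (Real.log_lt_log_iff hG0 hA0).mp hjen
  constructor
  · have : G ^ n ≤ A ^ n := Real.rpow_le_rpow hG0.le hGA hn.le
    rw [hprodeq]
    linarith
  · constructor
    · intro heq
      have heq' : G ^ n = A ^ n := by
        rw [hprodeq] at heq
        linarith
      by_contra h
      push_neg at h
      have hlt : G < A := hGlt h
      have : G ^ n < A ^ n := Real.rpow_lt_rpow hG0.le hlt hn
      linarith
    · intro hall
      have i0 : Fin k := ⟨0, hk⟩
      have hx : ∀ i, x i = x i0 := by
        intro i; simp only [hxdef, hall i i0]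
      have h1 : ∏ i, x i ^ (n / (k:ℝ)) = x i0 ^ n := by
        calc ∏ i, x i ^ (n / (k:ℝ)) = ∏ _i : Fin k, x i0 ^ (n / (k:ℝ)) :=
              Finset.prod_congr rfl fun i _ => by rw [hx i]
          _ = (x i0 ^ (n / (k:ℝ))) ^ (k : ℕ) := by
              simp [Finset.card_univ]
          _ = x i0 ^ n := by
              rw [← Real.rpow_natCast (x i0 ^ (n / (k:ℝ))) k, ← Real.rpow_mul (hxpos i0).le]
              rw [div_mul_cancel₀ _ hk0.ne']
      have h2 : A = x i0 := by
        have : ∑ i, m i = (k : ℝ) * m i0 := by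
          rw [Finset.sum_congr rfl fun i _ => hall i i0]
          simp [Finset.card_univ, mul_comm]
        simp only [hAdef, hxdef, this]
      rw [h1, h2]
end
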